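/- An operator T is a power partial isometry if and only if the self-adjoint semigroup generated by T consists entirely of partial isometries. -/

import Mathlib

open ContinuousLinearMap

variable {H : Type*} [NormedAddCommGroup H] [InnerProductSpace ℂ H] [CompleteSpace H]

def IsOrthoProj (E : H →L[ℂ] H) : Prop := IsSelfAdjoint E ∧ E * E = E

def IsPartialIsom (A : H →L[ℂ] H) : Prop := IsOrthoProj (adjoint A * A)

namespace PPIAux

/-- helper: equality from four product identities, `x x* = x y* = y x* = y y* = z`. -/
lemma eq_of_parts (x y z : H →L[ℂ] H) (h1 : x * star x = z) (h2 : x * star y = z)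
    (h3 : y * star x = z) (h4 : y * star y = z) : x = y := by
  have h0 : (x - y) * star (x - y) = 0 := by
    rw [star_sub, mul_sub, sub_mul, sub_mul, h1, h2, h3, h4]
    simp
  exact sub_eq_zero.mp ((CStarRing.mul_star_self_eq_zero_iff _).mp h0)

lemma eq_of_star_parts (x y z : H →L[ℂ] H) (h1 : star x * x = z) (h2 : star x * y = z)
    (h3 : star y * x = z) (h4 : star y * y = z) : x = y := by
  have h0 : star (x - y) * (x - y) = 0 := by
    rw [star_sub, mul_sub, sub_mul, sub_mul, h1, h2, h3, h4]
    simp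
  exact sub_eq_zero.mp ((CStarRing.star_mul_self_eq_zero_iff _).mp h0)

lemma isPartialIsom_iff (A : H →L[ℂ] H) :
    IsPartialIsom A ↔ A * star A * A = A := by
  rw [IsPartialIsom, IsOrthoProj, ← star_eq_adjoint]
  constructor
  · rintro ⟨-, hidem⟩
    have hid0 : star A * (A * (star A * A)) = star A * A := by
      simpa only [mul_assoc] using hidem
    have hid' : ∀ x : H →L[ℂ] H, star A * (A * (star A * (A * x))) = star A * (A * x) := by
      intro x
      have := congrArg (fun y => y * x) hidem
      simpa only [mul_assoc] using this
    have key : A * (star A * A) = A := by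
      apply eq_of_star_parts (A * (star A * A)) A (star A * A)
      · simp only [star_mul, star_star, mul_assoc]
        rw [hid', hid0]
      · simp only [star_mul, star_star, mul_assoc]
        rw [hid0]
      · exact hid0
      · rfl
    rw [mul_assoc]; exact key
  · intro hA
    constructor
    · rw [IsSelfAdjoint, star_mul, star_star]
    · calc star A * A * (star A * A) = star A * (A * star A * A) := by
            simp only [mul_assoc]
        _ = star A * A := by rw [hA]

/-- Power partial isometry hypothesis, right-associated. -/
def PPH (T : H →L[ℂ] H) : Prop := ∀ n : ℕ, T ^ n * ((star T) ^ n * T ^ n) = T ^ n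

variable (T : H →L[ℂ] H)

lemma pph_star (h : PPH T) : PPH (star T) := by
  intro n
  have := congrArg star (h n)
  simpa [star_mul, star_pow, star_star, mul_assoc] using this

noncomputable def ee (n : ℕ) : H →L[ℂ] H := T ^ n * (star T) ^ n
noncomputable def ff (n : ℕ) : H →L[ℂ] H := (star T) ^ n * T ^ n

lemma ff_star (n : ℕ) : star (ff T n) = ff T n := by
  simp [ff, star_mul, star_pow]

lemma ee_star (n : ℕ) : star (ee T n) = ee T n := by
  simp [ee, star_mul, star_pow]

lemma ff_sstar (n : ℕ) : ff (star T) n = ee T n := by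
  simp [ff, ee, star_star]

lemma ee_sstar (n : ℕ) : ee (star T) n = ff T n := by
  simp [ff, ee, star_star]

lemma ee_zero : ee T 0 = 1 := by simp [ee]
lemma ff_zero : ff T 0 = 1 := by simp [ff]

lemma ff_one : (star T) * T = ff T 1 := by simp [ff]
lemma ee_one : T * (star T) = ee T 1 := by simp [ee]

lemma ff_succ (b : ℕ) : star T * ff T b * T = ff T (b + 1) := by
  rw [ff, ff, pow_succ T b, pow_succ' (star T) b]
  simp only [mul_assoc]

variable {T}

lemma pphS (h : PPH T) : ∀ n : ℕ, (star T) ^ n * (T ^ n * (star T) ^ n) = (star T) ^ n := by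
  intro n
  simpa [star_star] using pph_star T h n

/-- left-associated forms -/
lemma pph' (h : PPH T) (n : ℕ) : T ^ n * (star T) ^ n * T ^ n = T ^ n := by
  rw [mul_assoc]; exact h n

lemma pphS' (h : PPH T) (n : ℕ) :
    (star T) ^ n * T ^ n * (star T) ^ n = (star T) ^ n := by
  rw [mul_assoc]; exact pphS h n

lemma ff_mul_ff_of_le (h : PPH T) {a b : ℕ} (hab : a ≤ b) : ff T a * ff T b = ff T b := by
  obtain ⟨k, rfl⟩ := exists_add_of_le hab
  simp only [ff, pow_add, ← mul_assoc]
  rw [pphS' h a]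

lemma ff_mul_ff_of_ge (h : PPH T) {a b : ℕ} (hab : a ≤ b) : ff T b * ff T a = ff T b := by
  obtain ⟨k, rfl⟩ := exists_add_of_le hab
  have hT : T ^ (a + k) = T ^ k * T ^ a := by rw [add_comm, pow_add]
  simp only [ff]
  rw [hT]
  simp only [mul_assoc]
  rw [h a]

lemma ff_idem (h : PPH T) (n : ℕ) : ff T n * ff T n = ff T n := ff_mul_ff_of_le h le_rfl

lemma ee_mul_ee_of_le (h : PPH T) {a b : ℕ} (hab : a ≤ b) : ee T a * ee T b = ee T b := by
  simp only [← ff_sstar T]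
  exact ff_mul_ff_of_le (pph_star T h) hab

lemma ee_mul_ee_of_ge (h : PPH T) {a b : ℕ} (hab : a ≤ b) : ee T b * ee T a = ee T b := by
  simp only [← ff_sstar T]
  exact ff_mul_ff_of_ge (pph_star T h) hab

lemma ee_idem (h : PPH T) (n : ℕ) : ee T n * ee T n = ee T n := ee_mul_ee_of_le h le_rfl

lemma ff_comm (h : PPH T) (a b : ℕ) : ff T a * ff T b = ff T b * ff T a := by
  rcases le_total a b with hab | hab
  · rw [ff_mul_ff_of_le h hab, ff_mul_ff_of_ge h hab]
  · rw [ff_mul_ff_of_ge h hab, ff_mul_ff_of_le h hab]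

/-- key idempotency: `f_n e_m f_n e_m = f_n e_m`, from `T^{n+m}` being a partial isometry. -/
lemma ff_ee_idem (h : PPH T) (n m : ℕ) :
    ff T n * ee T m * (ff T n * ee T m) = ff T n * ee T m := by
  have e1 : (star T) ^ (n + m) = (star T) ^ m * (star T) ^ n := by rw [add_comm, pow_add]
  have := congrArg (fun x => (star T) ^ n * x * (star T) ^ m) (h (n + m))
  rw [pow_add T n m, e1] at this
  simp only [ff, ee, mul_assoc] at this ⊢
  exact this

/-- two commuting projections lemma. -/
lemma proj_comm (p q : H →L[ℂ] H) (hp : star p = p) (hp2 : p * p = p)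
    (hq : star q = q) (hq2 : q * q = q) (hpq : p * q * (p * q) = p * q) :
    p * q = q * p := by
  have hpq' : p * q * p * q = p * q := by rw [mul_assoc (p * q) p q]; exact hpq
  have hr : p * q * p * (p * q * p) = p * q * p := by
    calc p * q * p * (p * q * p) = p * q * p * p * q * p := by simp only [mul_assoc]
      _ = p * q * (p * p) * q * p := by simp only [mul_assoc]
      _ = p * q * p * q * p := by rw [hp2]
      _ = p * q * p := by rw [hpq']
  have h1 : p * q = p * q * p := by
    apply eq_of_parts (p * q) (p * q * p) (p * q * p)
    · calc p * q * star (p * q) = p * q * (q * p) := by rw [star_mul, hp, hq]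
        _ = p * (q * q) * p := by simp only [mul_assoc]
        _ = p * q * p := by rw [hq2]
    · calc p * q * star (p * q * p) = p * q * (p * (q * p)) := by
            rw [star_mul, star_mul, hp, hq]
        _ = p * q * p * q * p := by simp only [mul_assoc]
        _ = p * q * p := by rw [hpq']
    · calc p * q * p * star (p * q) = p * q * p * (q * p) := by rw [star_mul, hp, hq]
        _ = p * q * p * q * p := by simp only [mul_assoc]
        _ = p * q * p := by rw [hpq']
    · calc p * q * p * star (p * q * p) = p * q * p * (p * (q * p)) := by
            rw [star_mul, star_mul, hp, hq]
        _ = p * q * p * (p * q * p) := by simp only [mul_assoc]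
        _ = p * q * p := hr
  have h2 : q * p = p * q := by
    have := congrArg star h1
    rw [star_mul, star_mul, star_mul, hp, hq] at this
    rw [this, ← mul_assoc, ← h1]
  exact h2.symm

lemma ff_ee_comm (h : PPH T) (n m : ℕ) : ff T n * ee T m = ee T m * ff T n :=
  proj_comm _ _ (ff_star T n) (ff_idem h n) (ee_star T m) (ee_idem h m) (ff_ee_idem h n m)

lemma ee_ff_comm (h : PPH T) (n m : ℕ) : ee T m * ff T n = ff T n * ee T m :=
  (ff_ee_comm h n m).symm

/-- the shift relation `T* f_b = f_{b+1} T*`. -/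
lemma ff_shift (h : PPH T) (b : ℕ) : ff T (b + 1) * star T = star T * ff T b := by
  apply eq_of_parts _ _ (ff T (b + 1))
  · calc ff T (b + 1) * star T * star (ff T (b + 1) * star T)
        = ff T (b + 1) * star T * (T * ff T (b + 1)) := by
          rw [star_mul, star_star, ff_star]
      _ = ff T (b + 1) * (star T * T) * ff T (b + 1) := by simp only [mul_assoc]
      _ = ff T (b + 1) * ff T 1 * ff T (b + 1) := by rw [ff_one]
      _ = ff T (b + 1) * ff T (b + 1) := by rw [ff_mul_ff_of_ge h (Nat.one_le_iff_ne_zero.mpr (Nat.succ_ne_zero b))]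
      _ = ff T (b + 1) := ff_idem h _
  · calc ff T (b + 1) * star T * star (star T * ff T b)
        = ff T (b + 1) * star T * (ff T b * T) := by rw [star_mul, star_star, ff_star]
      _ = ff T (b + 1) * (star T * ff T b * T) := by simp only [mul_assoc]
      _ = ff T (b + 1) * ff T (b + 1) := by rw [ff_succ]
      _ = ff T (b + 1) := ff_idem h _
  · calc star T * ff T b * star (ff T (b + 1) * star T)
        = star T * ff T b * (T * ff T (b + 1)) := by rw [star_mul, star_star, ff_star]
      _ = star T * ff T b * T * ff T (b + 1) := by simp only [mul_assoc]
      _ = ff T (b + 1) * ff T (b + 1) := by rw [ff_succ]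
      _ = ff T (b + 1) := ff_idem h _
  · calc star T * ff T b * star (star T * ff T b)
        = star T * ff T b * (ff T b * T) := by rw [star_mul, star_star, ff_star]
      _ = star T * (ff T b * ff T b) * T := by simp only [mul_assoc]
      _ = star T * ff T b * T := by rw [ff_idem h]
      _ = ff T (b + 1) := ff_succ T b

lemma ff_shift' (h : PPH T) (b : ℕ) : T * ff T (b + 1) = ff T b * T := by
  have := congrArg star (ff_shift h b)
  simpa [star_mul, star_star, ff_star] using this

lemma ee_shift (h : PPH T) (b : ℕ) : ee T (b + 1) * T = T * ee T b := by
  have := ff_shift (pph_star T h) b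
  simpa [ff_sstar, star_star] using this

lemma ee_shift' (h : PPH T) (b : ℕ) : star T * ee T (b + 1) = ee T b * star T := by
  have := ff_shift' (pph_star T h) b
  simpa [ff_sstar, star_star] using this

lemma ff_pow_shift (h : PPH T) (b m : ℕ) : ff T b * T ^ m = T ^ m * ff T (b + m) := by
  induction m with
  | zero => simp
  | succ m ih =>
    calc ff T b * T ^ (m + 1) = ff T b * (T ^ m * T) := by rw [pow_succ]
      _ = ff T b * T ^ m * T := by rw [mul_assoc]
      _ = T ^ m * ff T (b + m) * T := by rw [ih]
      _ = T ^ m * (ff T (b + m) * T) := by rw [mul_assoc]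
      _ = T ^ m * (T * ff T (b + m + 1)) := by rw [ff_shift' h (b + m)]
      _ = T ^ m * T * ff T (b + (m + 1)) := by rw [mul_assoc]; rfl
      _ = T ^ (m + 1) * ff T (b + (m + 1)) := by rw [pow_succ]

/-- `T* T^{c+1} = T^c f_{c+1}` -/
lemma star_mul_pow (h : PPH T) (c : ℕ) :
    star T * T ^ (c + 1) = T ^ c * ff T (c + 1) := by
  calc star T * T ^ (c + 1) = star T * (T * T ^ c) := by rw [pow_succ']
    _ = star T * T * T ^ c := by rw [mul_assoc]
    _ = ff T 1 * T ^ c := by rw [ff_one]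
    _ = T ^ c * ff T (1 + c) := ff_pow_shift h 1 c
    _ = T ^ c * ff T (c + 1) := by rw [add_comm]

/-- `T T*^{c+1} = e_1 T*^c` -/
lemma mul_starpow (c : ℕ) :
    T * (star T) ^ (c + 1) = ee T 1 * (star T) ^ c := by
  calc T * (star T) ^ (c + 1) = T * (star T * (star T) ^ c) := by rw [pow_succ']
    _ = T * star T * (star T) ^ c := by rw [mul_assoc]
    _ = ee T 1 * (star T) ^ c := by rw [ee_one]

/-- Normal form predicate: every word in `T, T*` has this shape. -/
def NF (T : H →L[ℂ] H) (x : H →L[ℂ] H) : Prop :=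
  ∃ a b c : ℕ, x = T ^ c * (ee T a * ff T b) ∨ x = ee T a * ff T b * (star T) ^ c

lemma nf_T_base : NF T T :=
  ⟨0, 0, 1, Or.inl (by simp [ee_zero, ff_zero])⟩

lemma nf_S_base : NF T (star T) :=
  ⟨0, 0, 1, Or.inr (by simp [ee_zero, ff_zero])⟩

lemma nf_mul_T (h : PPH T) {x : H →L[ℂ] H} (hx : NF T x) : NF T (T * x) := by
  obtain ⟨a, b, c, hx | hx⟩ := hx
  · exact ⟨a, b, c + 1, Or.inl (by rw [hx, ← mul_assoc, ← pow_succ'])⟩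
  · subst hx
    match c, b with
    | 0, b =>
      exact ⟨a, b, 1, Or.inl (by simp [mul_assoc])⟩
    | c + 1, 0 =>
      refine ⟨a + 1, 0, c, Or.inr ?_⟩
      calc T * (ee T a * ff T 0 * (star T) ^ (c + 1))
          = T * ee T a * ((star T) ^ (c + 1)) := by simp only [ff_zero, mul_one, mul_assoc]
        _ = ee T (a + 1) * T * (star T) ^ (c + 1) := by rw [← ee_shift h]
        _ = ee T (a + 1) * (T * (star T) ^ (c + 1)) := by rw [mul_assoc]
        _ = ee T (a + 1) * (ee T 1 * (star T) ^ c) := by rw [mul_starpow]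
        _ = ee T (a + 1) * ee T 1 * (star T) ^ c := by rw [mul_assoc]
        _ = ee T (a + 1) * (star T) ^ c := by
            rw [ee_mul_ee_of_ge h (Nat.one_le_iff_ne_zero.mpr (Nat.succ_ne_zero a))]
        _ = ee T (a + 1) * ff T 0 * (star T) ^ c := by rw [ff_zero, mul_one]
    | c + 1, b + 1 =>
      refine ⟨a + 1, b, c, Or.inr ?_⟩
      calc T * (ee T a * ff T (b + 1) * (star T) ^ (c + 1))
          = T * ee T a * ff T (b + 1) * (star T) ^ (c + 1) := by simp only [mul_assoc]
        _ = ee T (a + 1) * T * ff T (b + 1) * (star T) ^ (c + 1) := by rw [← ee_shift h]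
        _ = ee T (a + 1) * (T * ff T (b + 1)) * (star T) ^ (c + 1) := by
            simp only [mul_assoc]
        _ = ee T (a + 1) * (ff T b * T) * (star T) ^ (c + 1) := by rw [ff_shift' h]
        _ = ee T (a + 1) * ff T b * (T * (star T) ^ (c + 1)) := by simp only [mul_assoc]
        _ = ee T (a + 1) * ff T b * (ee T 1 * (star T) ^ c) := by rw [mul_starpow]
        _ = ee T (a + 1) * (ff T b * ee T 1) * (star T) ^ c := by simp only [mul_assoc]
        _ = ee T (a + 1) * (ee T 1 * ff T b) * (star T) ^ c := by rw [ff_ee_comm h]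
        _ = ee T (a + 1) * ee T 1 * ff T b * (star T) ^ c := by simp only [mul_assoc]
        _ = ee T (a + 1) * ff T b * (star T) ^ c := by
            rw [ee_mul_ee_of_ge h (Nat.one_le_iff_ne_zero.mpr (Nat.succ_ne_zero a))]

lemma nf_mul_S (h : PPH T) {x : H →L[ℂ] H} (hx : NF T x) : NF T (star T * x) := by
  obtain ⟨a, b, c, hx | hx⟩ := hx
  · subst hx
    match c with
    | 0 =>
      match a with
      | 0 =>
        refine ⟨0, b + 1, 1, Or.inr ?_⟩
        calc star T * (T ^ 0 * (ee T 0 * ff T b))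
            = star T * ff T b := by simp [ee_zero]
          _ = star T * ff T b * 1 := by rw [mul_one]
          _ = ff T (b + 1) * star T := by rw [mul_one, ← ff_shift h]
          _ = ee T 0 * ff T (b + 1) * (star T) ^ 1 := by simp [ee_zero]
      | a + 1 =>
        refine ⟨a, b + 1, 1, Or.inr ?_⟩
        calc star T * (T ^ 0 * (ee T (a + 1) * ff T b))
            = star T * ee T (a + 1) * ff T b := by simp [mul_assoc]
          _ = ee T a * star T * ff T b := by rw [ee_shift' h]
          _ = ee T a * (star T * ff T b) := by rw [mul_assoc]
          _ = ee T a * (ff T (b + 1) * star T) := by rw [← ff_shift h]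
          _ = ee T a * ff T (b + 1) * (star T) ^ 1 := by rw [pow_one, mul_assoc]
    | c + 1 =>
      rcases le_total b (c + 1) with hbc | hbc
      · refine ⟨a, c + 1, c, Or.inl ?_⟩
        calc star T * (T ^ (c + 1) * (ee T a * ff T b))
            = star T * T ^ (c + 1) * (ee T a * ff T b) := by rw [mul_assoc]
          _ = T ^ c * ff T (c + 1) * (ee T a * ff T b) := by rw [star_mul_pow h]
          _ = T ^ c * (ff T (c + 1) * ee T a * ff T b) := by simp only [mul_assoc]
          _ = T ^ c * (ee T a * ff T (c + 1) * ff T b) := by rw [ff_ee_comm h]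
          _ = T ^ c * (ee T a * (ff T (c + 1) * ff T b)) := by simp only [mul_assoc]
          _ = T ^ c * (ee T a * ff T (c + 1)) := by rw [ff_mul_ff_of_ge h hbc]
      · refine ⟨a, b, c, Or.inl ?_⟩
        calc star T * (T ^ (c + 1) * (ee T a * ff T b))
            = star T * T ^ (c + 1) * (ee T a * ff T b) := by rw [mul_assoc]
          _ = T ^ c * ff T (c + 1) * (ee T a * ff T b) := by rw [star_mul_pow h]
          _ = T ^ c * (ff T (c + 1) * ee T a * ff T b) := by simp only [mul_assoc]
          _ = T ^ c * (ee T a * ff T (c + 1) * ff T b) := by rw [ff_ee_comm h]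
          _ = T ^ c * (ee T a * (ff T (c + 1) * ff T b)) := by simp only [mul_assoc]
          _ = T ^ c * (ee T a * ff T b) := by rw [ff_mul_ff_of_le h hbc]
  · subst hx
    match a with
    | 0 =>
      refine ⟨0, b + 1, c + 1, Or.inr ?_⟩
      calc star T * (ee T 0 * ff T b * (star T) ^ c)
          = star T * ff T b * (star T) ^ c := by simp [ee_zero, mul_assoc]
        _ = ff T (b + 1) * star T * (star T) ^ c := by rw [← ff_shift h]
        _ = ff T (b + 1) * (star T * (star T) ^ c) := by rw [mul_assoc]
        _ = ff T (b + 1) * (star T) ^ (c + 1) := by rw [← pow_succ']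
        _ = ee T 0 * ff T (b + 1) * (star T) ^ (c + 1) := by rw [ee_zero, one_mul]
    | a + 1 =>
      refine ⟨a, b + 1, c + 1, Or.inr ?_⟩
      calc star T * (ee T (a + 1) * ff T b * (star T) ^ c)
          = star T * ee T (a + 1) * ff T b * (star T) ^ c := by simp only [mul_assoc]
        _ = ee T a * star T * ff T b * (star T) ^ c := by rw [ee_shift' h]
        _ = ee T a * (star T * ff T b) * (star T) ^ c := by simp only [mul_assoc]
        _ = ee T a * (ff T (b + 1) * star T) * (star T) ^ c := by rw [← ff_shift h]
        _ = ee T a * ff T (b + 1) * (star T * (star T) ^ c) := by simp only [mul_assoc]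
        _ = ee T a * ff T (b + 1) * (star T) ^ (c + 1) := by rw [← pow_succ']

lemma ppi_eq_of_nf (h : PPH T) {x : H →L[ℂ] H} (hx : NF T x) : x * star x * x = x := by
  have key : ∀ a b c : ℕ,
      (T ^ c * (ee T a * ff T b)) * star (T ^ c * (ee T a * ff T b)) *
        (T ^ c * (ee T a * ff T b)) = T ^ c * (ee T a * ff T b) := by
    intro a b c
    set P := ee T a * ff T b with hP
    have hPstar : star P = P := by
      rw [hP, star_mul, ee_star, ff_star, ff_ee_comm h]
    have hPP : P * P = P := by
      calc P * P = ee T a * (ff T b * ee T a) * ff T b := by simp only [hP, mul_assoc]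
        _ = ee T a * (ee T a * ff T b) * ff T b := by rw [ff_ee_comm h]
        _ = ee T a * ee T a * (ff T b * ff T b) := by simp only [mul_assoc]
        _ = ee T a * ff T b := by rw [ee_idem h, ff_idem h]
    have hPf : P * ff T c = ff T c * P := by
      calc P * ff T c = ee T a * (ff T b * ff T c) := by rw [hP, mul_assoc]
        _ = ee T a * (ff T c * ff T b) := by rw [ff_comm h]
        _ = ee T a * ff T c * ff T b := by rw [mul_assoc]
        _ = ff T c * ee T a * ff T b := by rw [ee_ff_comm h]
        _ = ff T c * P := by rw [hP, mul_assoc]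
    have hTf : T ^ c * ff T c = T ^ c := by rw [ff]; exact h c
    have hffP : (star T) ^ c * (T ^ c * P) = ff T c * P := by rw [ff, mul_assoc]
    have hPP' : ∀ x : H →L[ℂ] H, P * (P * x) = P * x := by
      intro x; rw [← mul_assoc, hPP]
    calc (T ^ c * P) * star (T ^ c * P) * (T ^ c * P)
        = T ^ c * P * (P * (star T) ^ c) * (T ^ c * P) := by
          rw [star_mul, hPstar, star_pow]
      _ = T ^ c * (P * (P * ((star T) ^ c * (T ^ c * P)))) := by simp only [mul_assoc]
      _ = T ^ c * (P * (P * (ff T c * P))) := by rw [hffP]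
      _ = T ^ c * (P * (P * (P * ff T c))) := by rw [← hPf]
      _ = T ^ c * (P * (P * ff T c)) := by rw [hPP']
      _ = T ^ c * (P * ff T c) := by rw [hPP']
      _ = T ^ c * (ff T c * P) := by rw [hPf]
      _ = T ^ c * ff T c * P := by rw [← mul_assoc]
      _ = T ^ c * P := by rw [hTf]
  obtain ⟨a, b, c, hx | hx⟩ := hx
  · rw [hx]; exact key a b c
  · have hxs : star x = T ^ c * (ee T a * ff T b) := by
      rw [hx, star_mul, star_mul, star_pow, star_star, ee_star, ff_star,
        ff_ee_comm h]
    have := congrArg star (key a b c)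
    rw [← hxs] at this
    simpa [star_mul, star_star, mul_assoc] using this

lemma nf_word (h : PPH T) :
    ∀ l : List (H →L[ℂ] H), l ≠ [] → (∀ A ∈ l, A = T ∨ A = star T) → NF T l.prod := by
  intro l
  induction l with
  | nil => intro hl; exact absurd rfl hl
  | cons A l ih =>
    intro _ hmem
    rcases List.eq_nil_or_concat l with hl | _
    · subst hl
      simp only [List.prod_cons, List.prod_nil, mul_one]
      rcases hmem A List.mem_cons_self with rfl | rfl
      · exact nf_T_base
      · exact nf_S_base
    · have hlne : l ≠ [] := by
        rintro rfl
        simp_all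
      have hnf := ih hlne (fun B hB => hmem B (List.mem_cons_of_mem A hB))
      rw [List.prod_cons]
      rcases hmem A List.mem_cons_self with rfl | rfl
      · exact nf_mul_T h hnf
      · exact nf_mul_S h hnf

end PPIAux

/-- `T` is a power partial isometry iff the self-adjoint semigroup generated by `T`
(the set of all nonempty words in `T` and `T*`) consists of partial isometries. -/
theorem power_partial_isometry_iff_selfadjoint_semigroup
    (T : H →L[ℂ] H) :
    (∀ n : ℕ, 1 ≤ n → IsPartialIsom (T ^ n)) ↔
      (∀ l : List (H →L[ℂ] H), l ≠ [] → (∀ A ∈ l, A = T ∨ A = adjoint T) →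
        IsPartialIsom l.prod) := by
  constructor
  · intro hp l hl hmem
    have hPPH : PPIAux.PPH T := by
      intro n
      match n with
      | 0 => simp
      | n + 1 =>
        have := (PPIAux.isPartialIsom_iff (T ^ (n + 1))).mp (hp (n + 1) (Nat.le_add_left 1 n))
        rw [star_pow] at this
        rw [← mul_assoc]
        exact this
    have hmem' : ∀ A ∈ l, A = T ∨ A = star T := by
      intro A hA
      rcases hmem A hA with h1 | h1
      · exact Or.inl h1
      · exact Or.inr (by rw [h1, star_eq_adjoint])
    exact (PPIAux.isPartialIsom_iff _).mpr
      (PPIAux.ppi_eq_of_nf hPPH (PPIAux.nf_word hPPH l hl hmem'))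
  · intro hs n hn
    have hrep : (List.replicate n T) ≠ [] := by
      intro hcontra
      rw [List.replicate_eq_nil_iff] at hcontra
      omega
    have := hs (List.replicate n T) hrep
      (fun A hA => Or.inl (List.eq_of_mem_replicate hA))
    rwa [List.prod_replicate] at this
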